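/- arXiv:1812.03746 — 3 statements merged into one kernel-verified Lean document; each statement's English description precedes it below -/
import Mathlib

section
/- Let S be a set and F, G : S → S commuting bijections. Suppose the quotient S/F by the Z-action n·s = F^n(s) is finite with representatives s_1,…,s_r, and for each i there exist a positive integer p_i and an index σ(i) with G(s_i) = F^{p_i}(s_{σ(i)}). Then the quotient S/G is also finite. -/
/-!
Let `S` be a set and `F, G : S ≃ S` commuting bijections.  Suppose the quotient `S/F`
(by the `ℤ`-action `n • s = F^n s`) is finite, with a complete set of representatives
`s_1, …, s_r` (covering all `F`-orbits, pairwise in distinct `F`-orbits), and for each `i`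
there are a positive integer `p i` and an index `σ i` with `G (s i) = F^(p i) (s (σ i))`.
Then the quotient `S/G` is also finite, expressed as: there is a finite family of elements
of `S` meeting every `G`-orbit.
-/

theorem finite_orbits_of_G (S : Type*) (F G : Equiv.Perm S)
    (hcomm : F * G = G * F)
    (r : ℕ) (s : Fin r → S)
    (hcover : ∀ x : S, ∃ i : Fin r, ∃ n : ℤ, (F ^ n) (s i) = x)
    (hdist : ∀ i j : Fin r, (∃ n : ℤ, (F ^ n) (s i) = s j) → i = j)
    (p : Fin r → ℕ) (hp : ∀ i, 0 < p i)
    (σ : Fin r → Fin r)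
    (hG : ∀ i, G (s i) = (F ^ (p i : ℤ)) (s (σ i))) :
    ∃ (m : ℕ) (t : Fin m → S), ∀ x : S, ∃ j : Fin m, ∃ n : ℤ, (G ^ n) (t j) = x := by
  classical
  have hFG : Commute F G := hcomm
  -- commuting zpowers, applied
  have keyc : ∀ (a b : ℤ) (y : S), (G ^ a) ((F ^ b) y) = (F ^ b) ((G ^ a) y) := by
    intro a b y
    have h : (F ^ b) * (G ^ a) = (G ^ a) * (F ^ b) := (hFG.zpow_zpow b a).eq
    rw [← Equiv.Perm.mul_apply, ← h, Equiv.Perm.mul_apply]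
  have key1 : ∀ (b : ℤ) (y : S), G ((F ^ b) y) = (F ^ b) (G y) := by
    intro b y
    have := keyc 1 b y
    simpa using this
  -- σ is injective
  have hσinj : Function.Injective σ := by
    intro i j hij
    have h4 : G ((F ^ ((p i : ℤ) - (p j : ℤ))) (s j)) = G (s i) := by
      rw [key1, hG j, ← hij, hG i, ← Equiv.Perm.mul_apply, ← zpow_add, sub_add_cancel]
    exact (hdist j i ⟨_, G.injective h4⟩).symm
  have hσbij : Function.Bijective σ := Finite.injective_iff_bijective.mp hσinj
  set σe : Equiv.Perm (Fin r) := Equiv.ofBijective σ hσbij with hσe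
  have hσe_apply : ∀ i, σe i = σ i := fun i => rfl
  -- iteration lemma
  have iter : ∀ (n : ℕ) (i : Fin r), ∃ Q : ℕ, n ≤ Q ∧
      (G ^ n) (s i) = (F ^ (Q : ℤ)) (s ((σe ^ n) i)) := by
    intro n
    induction n with
    | zero => intro i; exact ⟨0, le_refl 0, by simp⟩
    | succ n ih =>
      intro i
      obtain ⟨Q, hQ, hEq⟩ := ih i
      have hp' := hp ((σe ^ n) i)
      refine ⟨Q + p ((σe ^ n) i), by omega, ?_⟩
      have h1 : (G ^ (n + 1)) (s i) = G ((G ^ n) (s i)) := by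
        rw [pow_succ', Equiv.Perm.mul_apply]
      rw [h1, hEq, key1, hG ((σe ^ n) i)]
      have h2 : ((σe ^ (n + 1)) i) = σ ((σe ^ n) i) := by
        rw [pow_succ', Equiv.Perm.mul_apply]; rfl
      rw [h2, ← Equiv.Perm.mul_apply, ← zpow_add]
      norm_num
  -- each G^c fixes each F-orbit representative up to an F-power
  set c : ℕ := Fintype.card (Equiv.Perm (Fin r)) with hc
  have hcpos : 0 < c := Fintype.card_pos
  have hkey2 : ∀ i : Fin r, ∃ P : ℕ, c ≤ P ∧ (G ^ c) (s i) = (F ^ (P : ℤ)) (s i) := by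
    intro i
    obtain ⟨Q, h1, h2⟩ := iter c i
    refine ⟨Q, h1, ?_⟩
    rwa [pow_card_eq_one, Equiv.Perm.one_apply] at h2
  choose Pf hPc hPEq using hkey2
  set N : ℕ := Finset.univ.sup Pf with hN
  refine ⟨r * N, fun j => (F ^ (((finProdFinEquiv.symm j).2 : ℕ) : ℤ))
      (s (finProdFinEquiv.symm j).1), ?_⟩
  intro x
  obtain ⟨i, n, hn⟩ := hcover x
  have hPpos : 0 < (Pf i : ℤ) := by
    have := hPc i; exact_mod_cast lt_of_lt_of_le hcpos this
  set P : ℤ := (Pf i : ℤ) with hP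
  set q : ℤ := n / P with hq
  set k : ℤ := n % P with hk
  have hk0 : 0 ≤ k := Int.emod_nonneg n (ne_of_gt hPpos)
  have hkP : k < P := Int.emod_lt_of_pos n hPpos
  have hkN : k.toNat < N := by
    have h1 : k.toNat < Pf i := by omega
    exact lt_of_lt_of_le h1 (Finset.le_sup (Finset.mem_univ i))
  refine ⟨finProdFinEquiv (i, ⟨k.toNat, hkN⟩), (c : ℤ) * q, ?_⟩
  simp only [Equiv.symm_apply_apply]
  have hktn : ((k.toNat : ℕ) : ℤ) = k := Int.toNat_of_nonneg hk0
  rw [hktn]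
  -- fixed point trick: (G^c)^q (s i) = (F^P)^q (s i)
  have hcomPG : Commute (F ^ P) ((G : Equiv.Perm S) ^ c) := by
    have := hFG.zpow_zpow P (c : ℤ)
    rwa [zpow_natCast] at this
  have hfix : ((F ^ P)⁻¹ * (G ^ c)) (s i) = s i := by
    rw [Equiv.Perm.mul_apply, hPEq i, ← hP, Equiv.Perm.inv_def, Equiv.symm_apply_apply]
  have hfixq : ((((F ^ P)⁻¹ * (G ^ c)) : Equiv.Perm S) ^ q) (s i) = s i :=
    Function.IsFixedPt.perm_zpow hfix q
  have hmul : (F ^ P) ^ q * ((F ^ P)⁻¹ * (G ^ c)) ^ q = ((G : Equiv.Perm S) ^ c) ^ q := by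
    rw [hcomPG.inv_left.mul_zpow, inv_zpow, mul_inv_cancel_left]
  have hGFq : (((G : Equiv.Perm S) ^ c) ^ q) (s i) = ((F ^ P) ^ q) (s i) := by
    rw [← hmul, Equiv.Perm.mul_apply, hfixq]
  -- put everything together
  have hGz : (G ^ ((c : ℤ) * q)) ((F ^ k) (s i)) = (F ^ k) ((G ^ ((c : ℤ) * q)) (s i)) :=
    keyc _ _ _
  rw [hGz]
  have hGcq : (G ^ ((c : ℤ) * q)) (s i) = ((F ^ P) ^ q) (s i) := by
    rw [zpow_mul, zpow_natCast, hGFq]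
  rw [hGcq, ← zpow_mul, ← Equiv.Perm.mul_apply, ← zpow_add]
  have hn' : k + P * q = n := by
    have h := Int.mul_ediv_add_emod n P
    rw [← hq, ← hk] at h
    linarith
  rw [hn', hn]
end

section
/- Let D be a triangulated category, E ⊆ D an admissible thick subcategory, and (G, F) an adjoint pair of exact endofunctors of D (G left adjoint to F). If F restricts to an autoequivalence of E and F acts nilpotently on the right orthogonal E^⊥ (i.e. F(E^⊥) ⊆ E^⊥ and F^b(E^⊥) = 0 for some b), then G(E) ⊆ E and the restriction of G to E is a quasi-inverse of the restriction of F to E; in particular G restricts to an autoequivalence of E. -/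
/-!
Let `D` be a triangulated category, `E ⊆ D` an admissible thick subcategory, and `(G, F)`
an adjoint pair of exact endofunctors of `D` (`G` left adjoint to `F`).  If `F` restricts
to an autoequivalence of `E` and `F` acts nilpotently on the right orthogonal `E^⊥`, then
`G(E) ⊆ E` and the restriction of `G` to `E` is a quasi-inverse of the restriction of `F`
to `E`; in particular `G` restricts to an autoequivalence of `E`.
-/

open CategoryTheory Limits CategoryTheory.Pretriangulated

namespace Stmt4

universe v u

variable {D : Type u} [Category.{v} D] [Preadditive D] [HasZeroObject D]
  [HasShift D ℤ] [∀ n : ℤ, (CategoryTheory.shiftFunctor D n).Additive] [Pretriangulated D]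

/-- Iterated composition of an endofunctor. -/
def iter (F : D ⥤ D) : ℕ → D ⥤ D
  | 0 => 𝟭 D
  | n + 1 => iter F n ⋙ F

/-- The right orthogonal of a class of objects. -/
def rOrth (P : D → Prop) : D → Prop := fun d => ∀ e : D, P e → ∀ f : e ⟶ d, f = 0

theorem adjoint_restricts_to_quasi_inverse
    (P : D → Prop)
    -- `E` is a thick subcategory:
    (hP_iso : ∀ {X Y : D}, (X ≅ Y) → P X → P Y)
    (hP_shift : ∀ (X : D) (n : ℤ), P X → P (X⟦n⟧))
    (hP_tri : ∀ T ∈ distTriang D, P T.obj₁ → P T.obj₂ → P T.obj₃)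
    (hP_retract : ∀ (X Z : D), P Z → ∀ (i : X ⟶ Z) (r : Z ⟶ X), i ≫ r = 𝟙 X → P X)
    -- `E` is admissible, i.e. the inclusion of the corresponding full subcategory
    -- has both a right adjoint and a left adjoint:
    (_hadm_right : (ObjectProperty.ι P).IsLeftAdjoint)
    (_hadm_left : (ObjectProperty.ι P).IsRightAdjoint)
    -- `(G, F)` an adjoint pair of exact endofunctors:
    (F G : D ⥤ D) [F.CommShift ℤ] [F.IsTriangulated] [G.CommShift ℤ] [G.IsTriangulated]
    (adj : G ⊣ F)
    -- `F` restricts to an autoequivalence of `E`: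
    (hFP : ∀ d : D, P d → P (F.obj d))
    (hFE : (ObjectProperty.lift P (ObjectProperty.ι P ⋙ F)
      (fun X => hFP X.1 X.2)).IsEquivalence)
    -- `F` acts nilpotently on `E^⊥`:
    (hFperp : ∀ d : D, rOrth P d → rOrth P (F.obj d))
    (hnilp : ∃ b : ℕ, ∀ d : D, rOrth P d → IsZero ((iter F b).obj d)) :
    ∃ hGP : ∀ d : D, P d → P (G.obj d),
      Nonempty ((ObjectProperty.lift P (ObjectProperty.ι P ⋙ F)
            (fun X => hFP X.1 X.2) ⋙
          ObjectProperty.lift P (ObjectProperty.ι P ⋙ G)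
            (fun X => hGP X.1 X.2)) ≅ 𝟭 _) ∧
      Nonempty ((ObjectProperty.lift P (ObjectProperty.ι P ⋙ G)
            (fun X => hGP X.1 X.2) ⋙
          ObjectProperty.lift P (ObjectProperty.ι P ⋙ F)
            (fun X => hFP X.1 X.2)) ≅ 𝟭 _) := by
  obtain ⟨R, ⟨a⟩⟩ := _hadm_right.exists_rightAdjoint
  -- composition with the counit is bijective on Homs from objects of `E`
  have hbij : ∀ (X : D) (hX : P X) (d : D), Function.Bijective
      (fun (f : X ⟶ ((ObjectProperty.ι P).obj (R.obj d))) => f ≫ a.counit.app d) := by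
    intro X hX d
    have he : (fun (f : X ⟶ ((ObjectProperty.ι P).obj (R.obj d))) => f ≫ a.counit.app d)
        = fun (f : X ⟶ ((ObjectProperty.ι P).obj (R.obj d))) => (a.homEquiv ⟨X, hX⟩ d).symm (ObjectProperty.homMk f) := by
      funext f
      exact (a.homEquiv_counit (X := ⟨X, hX⟩) (Y := d) (g := ObjectProperty.homMk f)).symm
    rw [he]
    exact (a.homEquiv ⟨X, hX⟩ d).symm.bijective.comp
      ((ObjectProperty.fullyFaithfulι P).homEquiv (X := ⟨X, hX⟩) (Y := R.obj d)).symm.bijective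
  -- if all maps from `d` to the right orthogonal vanish, then `d ∈ E`
  have lemA : ∀ d : D, (∀ t : D, rOrth P t → ∀ f : d ⟶ t, f = 0) → P d := by
    intro d hd
    obtain ⟨t, g, h, hT⟩ := Pretriangulated.distinguished_cocone_triangle (a.counit.app d)
    have ht : rOrth P t := by
      intro e he f
      -- first : f ≫ h = 0
      have h31 : h ≫ (a.counit.app d)⟦(1:ℤ)⟧' = 0 :=
        comp_distTriang_mor_zero₃₁ _ hT
      have hz : (f ≫ h) ≫ (a.counit.app d)⟦(1:ℤ)⟧' = 0 := by
        rw [Category.assoc, h31, comp_zero]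
      have h3 : f ≫ h = 0 := by
        set s := shiftFunctorCompIsoId D (1:ℤ) (-1) (by ring) with hs
        have hnat := s.hom.naturality (a.counit.app d)
        have hg1' : ((f ≫ h)⟦(-1:ℤ)⟧' ≫
            s.hom.app ((ObjectProperty.ι P).obj (R.obj d))) ≫ a.counit.app d = 0 := by
          rw [Category.assoc]
          have : s.hom.app ((ObjectProperty.ι P).obj (R.obj d)) ≫
              (𝟭 D).map (a.counit.app d)
              = ((shiftFunctor D (1:ℤ)) ⋙ shiftFunctor D (-1:ℤ)).map (a.counit.app d) ≫
                s.hom.app d := (s.hom.naturality (a.counit.app d)).symm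
          simp only [Functor.id_map] at this
          rw [this]
          show (f ≫ h)⟦(-1:ℤ)⟧' ≫ ((a.counit.app d)⟦(1:ℤ)⟧')⟦(-1:ℤ)⟧' ≫ s.hom.app d = 0
          rw [← Category.assoc, ← Functor.map_comp, hz]
          simp
        have hinj := (hbij (e⟦(-1:ℤ)⟧) (hP_shift e (-1) he) d).injective
        have hz2 : (f ≫ h)⟦(-1:ℤ)⟧' ≫
            s.hom.app ((ObjectProperty.ι P).obj (R.obj d)) = 0 := by
          have h0 : ((0 : e⟦(-1:ℤ)⟧ ⟶ (ObjectProperty.ι P).obj (R.obj d))) ≫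
              a.counit.app d = 0 := zero_comp
          exact hinj (hg1'.trans h0.symm)
        have : (f ≫ h)⟦(-1:ℤ)⟧' = 0 := by
          have := hz2 =≫ s.inv.app ((ObjectProperty.ι P).obj (R.obj d))
          simpa using this
        exact (shiftFunctor D (-1:ℤ)).map_injective (by simpa using this)
      obtain ⟨q, hq⟩ := Pretriangulated.Triangle.coyoneda_exact₃ _ hT f h3
      obtain ⟨p, hp⟩ := (hbij e he d).surjective q
      have h12 : a.counit.app d ≫ g = 0 := comp_distTriang_mor_zero₁₂ _ hT
      rw [hq, ← hp]
      show (p ≫ a.counit.app d) ≫ g = 0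
      rw [Category.assoc, h12, comp_zero]
    have hg0 : g = 0 := hd t ht g
    obtain ⟨r, hr⟩ := Pretriangulated.Triangle.coyoneda_exact₂ _ hT (𝟙 d)
      (show 𝟙 d ≫ g = 0 by rw [hg0, comp_zero])
    exact hP_retract d _ (R.obj d).property r (a.counit.app d) hr.symm
  have hGP : ∀ d : D, P d → P (G.obj d) := by
    intro e he
    apply lemA
    intro t ht f
    have h1 : adj.homEquiv e t f = 0 := (hFperp t ht) e he _
    have h2 : f = (adj.homEquiv e t).symm 0 := by rw [← h1, Equiv.symm_apply_apply]
    rw [h2, adj.homEquiv_counit]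
    simp
  refine ⟨hGP, ?_, ?_⟩ <;>
  · have inst : (ObjectProperty.lift P (ObjectProperty.ι P ⋙ F)
        (fun X => hFP X.1 X.2)).IsEquivalence := hFE
    let F' := ObjectProperty.lift P (ObjectProperty.ι P ⋙ F) (fun X => hFP X.1 X.2)
    let G' := ObjectProperty.lift P (ObjectProperty.ι P ⋙ G) (fun X => hGP X.1 X.2)
    let adj' : G' ⊣ F' := Adjunction.mkOfHomEquiv
      { homEquiv := fun X Y => ((ObjectProperty.fullyFaithfulι P).homEquiv (X := G'.obj X) (Y := Y)).trans
          ((adj.homEquiv X.obj Y.obj).trans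
            ((ObjectProperty.fullyFaithfulι P).homEquiv (X := X) (Y := F'.obj Y)).symm)
        homEquiv_naturality_left_symm := fun f g => by
          ext; exact adj.homEquiv_naturality_left_symm f.hom g.hom
        homEquiv_naturality_right := fun f g => by
          ext; exact adj.homEquiv_naturality_right f.hom g.hom }
    have instF' : F'.IsEquivalence := hFE
    let eqv := F'.asEquivalence
    let i : G' ≅ eqv.inverse := adj'.leftAdjointUniq eqv.symm.toAdjunction
    first
    | exact ⟨Functor.isoWhiskerLeft F' i ≪≫ eqv.unitIso.symm⟩
    | exact ⟨Functor.isoWhiskerRight i F' ≪≫ eqv.counitIso⟩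

end Stmt4
end

section
/- Let D be a triangulated category with a semiorthogonal decomposition D = E ⊥ F (E right admissible with E^⊥ = F), and let τ : D → E be the right adjoint of the inclusion. Then for all d, d' ∈ D there is a natural isomorphism Hom_D(τ(d), d') ≅ Hom_{D/F}(q(d), q(d')), where q : D → D/F is the Verdier quotient functor. -/
/-!
Let `D` be a triangulated category with a semiorthogonal decomposition `D = E ⊥ F`
(`E` right admissible with `E^⊥ = F`), and let `τ : D → E` be the right adjoint of the
inclusion.  Then for all `d, d'` there is an isomorphism, natural in both variables,
`Hom_D(τ d, d') ≅ Hom_{D/F}(q d, q d')`, where `q : D → D/F` is the Verdier quotient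
functor (realized as the localization of `D` at the class `W` of morphisms whose cone
lies in `F = E^⊥`).
-/

open CategoryTheory Limits CategoryTheory.Pretriangulated

namespace Stmt9

universe v u u₂

variable {D : Type u} [Category.{v} D] [Preadditive D] [HasZeroObject D]
  [HasShift D ℤ] [∀ n : ℤ, (CategoryTheory.shiftFunctor D n).Additive] [Pretriangulated D]

/-- The right orthogonal of a class of objects. -/
def rOrth (P : D → Prop) : D → Prop := fun d => ∀ e : D, P e → ∀ f : e ⟶ d, f = 0

/-- The class of morphisms whose cone lies in the right orthogonal of `P`. -/
def coneInOrth (P : D → Prop) : MorphismProperty D := fun X Y f =>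
  ∃ (Z : D) (g : Y ⟶ Z) (h : Z ⟶ X⟦(1 : ℤ)⟧),
    (Triangle.mk f g h ∈ distTriang D) ∧ rOrth P Z

section Aux

variable {P : D → Prop}

set_option linter.unusedSectionVars false

lemma rOrth_shift (hP_shift : ∀ (X : D) (n : ℤ), P X → P (X⟦n⟧))
    {Z : D} (hZ : rOrth P Z) (n : ℤ) : rOrth P (Z⟦n⟧) := by
  intro e he f
  have h0 : (shiftFunctor D (-n)).map f ≫
      (shiftFunctorCompIsoId D n (-n) (add_neg_cancel n)).hom.app Z = 0 :=
    hZ _ (hP_shift e (-n) he) _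
  have h1 : (shiftFunctor D (-n)).map f = 0 := by
    have := congrArg (· ≫ (shiftFunctorCompIsoId D n (-n) (add_neg_cancel n)).inv.app Z) h0
    simpa using this
  apply (shiftFunctor D (-n)).map_injective
  rw [h1, Functor.map_zero]

lemma bij_comp_of_coneInOrth (hP_shift : ∀ (X : D) (n : ℤ), P X → P (X⟦n⟧))
    {X Y : D} {w : X ⟶ Y} (hw : coneInOrth P w) {A : D} (hA : P A) :
    Function.Bijective (fun (x : A ⟶ X) => x ≫ w) := by
  obtain ⟨Z, g, h, hT, hZ⟩ := hw
  constructor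
  · intro f₁ f₂ hf
    have hsub : (f₁ - f₂) ≫ w = 0 := by
      simp only [Preadditive.sub_comp]
      rw [show f₁ ≫ w = f₂ ≫ w from hf, sub_self]
    obtain ⟨g', hg'⟩ := Triangle.coyoneda_exact₂ _ (inv_rot_of_distTriang _ hT) (f₁ - f₂) hsub
    have : g' = 0 := rOrth_shift hP_shift hZ (-1) A hA g'
    have : f₁ - f₂ = 0 := by rw [hg', this]; exact zero_comp
    exact sub_eq_zero.mp this
  · intro y
    obtain ⟨x, hx⟩ := Triangle.coyoneda_exact₂ _ hT y (hZ A hA _)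
    exact ⟨x, hx.symm⟩

variable (τ : D ⥤ ObjectProperty.FullSubcategory P) (adj : ObjectProperty.ι P ⊣ τ)

lemma counit_comp_bij (A : ObjectProperty.FullSubcategory P) (d : D) :
    Function.Bijective
      (fun (x : (ObjectProperty.ι P).obj A ⟶
          (ObjectProperty.ι P).obj (τ.obj d)) => x ≫ adj.counit.app d) := by
  have key : ∀ (x' : A ⟶ τ.obj d),
      (ObjectProperty.ι P).map x' ≫ adj.counit.app d = (adj.homEquiv A d).symm x' := by
    intro x'
    rw [Adjunction.homEquiv_counit]
  constructor
  · intro x₁ x₂ hx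
    obtain ⟨x₁', rfl⟩ := (ObjectProperty.ι P).map_surjective x₁
    obtain ⟨x₂', rfl⟩ := (ObjectProperty.ι P).map_surjective x₂
    simp only [key] at hx
    rw [(adj.homEquiv A d).symm.injective hx]
  · intro y
    refine ⟨(ObjectProperty.ι P).map (adj.homEquiv A d y), ?_⟩
    simp only [key, Equiv.symm_apply_apply]

lemma counit_mem (hP_shift : ∀ (X : D) (n : ℤ), P X → P (X⟦n⟧)) (d : D) :
    coneInOrth P (adj.counit.app d) := by
  obtain ⟨Z, g, hh, hT⟩ := distinguished_cocone_triangle (adj.counit.app d)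
  refine ⟨Z, g, hh, hT, ?_⟩
  intro e he f
  have h31 : hh ≫ (adj.counit.app d)⟦(1:ℤ)⟧' = 0 := by
    have := comp_distTriang_mor_zero₃₁ _ hT
    dsimp at this
    exact this
  have hfh : f ≫ hh = 0 := by
    have hc : f ≫ hh ≫ (adj.counit.app d)⟦(1:ℤ)⟧' = 0 := by rw [h31, comp_zero]
    let α := shiftFunctorCompIsoId D (1:ℤ) (-1:ℤ) (by ring)
    let u' : (shiftFunctor D (-1:ℤ)).obj e ⟶
        (ObjectProperty.ι P).obj (τ.obj d) :=
      (shiftFunctor D (-1:ℤ)).map (f ≫ hh) ≫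
        α.hom.app ((ObjectProperty.ι P).obj (τ.obj d))
    have hnat : (shiftFunctor D (-1:ℤ)).map ((adj.counit.app d)⟦(1:ℤ)⟧') ≫ α.hom.app d =
        α.hom.app ((ObjectProperty.ι P).obj (τ.obj d)) ≫ adj.counit.app d :=
      α.hom.naturality _
    have hu : u' ≫ adj.counit.app d = 0 := by
      show ((shiftFunctor D (-1:ℤ)).map (f ≫ hh) ≫ _) ≫ adj.counit.app d = 0
      rw [Category.assoc, ← hnat, ← Category.assoc, ← Functor.map_comp, Category.assoc,
        hc, Functor.map_zero, zero_comp]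
    have hinj := (counit_comp_bij τ adj ⟨(shiftFunctor D (-1:ℤ)).obj e,
      hP_shift e (-1) he⟩ d).1
    have hu0 : u' = 0 := by
      apply hinj
      show u' ≫ adj.counit.app d =
        (0 : _ ⟶ (ObjectProperty.ι P).obj (τ.obj d)) ≫ adj.counit.app d
      rw [hu, zero_comp]
    have hsm : (shiftFunctor D (-1:ℤ)).map (f ≫ hh) = 0 := by
      have := congrArg
        (· ≫ α.inv.app ((ObjectProperty.ι P).obj (τ.obj d))) hu0
      simpa [u'] using this
    have := (shiftFunctor D (-1:ℤ)).map_injective (by rw [hsm, Functor.map_zero] :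
      (shiftFunctor D (-1:ℤ)).map (f ≫ hh) = (shiftFunctor D (-1:ℤ)).map 0)
    exact this
  obtain ⟨f', hf'⟩ := Triangle.coyoneda_exact₃ _ hT f hfh
  obtain ⟨x, hx⟩ := (counit_comp_bij τ adj ⟨e, he⟩ d).2 f'
  have h12 : adj.counit.app d ≫ g = 0 := by
    have := comp_distTriang_mor_zero₁₂ _ hT
    dsimp at this
    exact this
  have hfx : f = x ≫ adj.counit.app d ≫ g := by
    rw [hf', ← hx]
    dsimp
    exact Category.assoc _ _ _
  rw [hfx, h12, comp_zero]

lemma tau_inverts (adj' : ObjectProperty.ι P ⊣ τ)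
    (hP_shift : ∀ (X : D) (n : ℤ), P X → P (X⟦n⟧)) :
    (coneInOrth P).IsInvertedBy τ := by
  intro X Y w hw
  apply isIso_of_yoneda_map_bijective
  intro A
  have hb := bij_comp_of_coneInOrth hP_shift hw
    (A := (ObjectProperty.ι P).obj A) A.property
  have heq : (fun (x : A ⟶ τ.obj X) => x ≫ τ.map w) =
      (adj'.homEquiv A Y) ∘ (fun f => f ≫ w) ∘ (adj'.homEquiv A X).symm := by
    funext x
    dsimp
    have h2 := adj'.homEquiv_naturality_right ((adj'.homEquiv A X).symm x) w
    rw [Equiv.apply_symm_apply] at h2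
    exact h2.symm
  rw [heq]
  exact (adj'.homEquiv A Y).bijective.comp (hb.comp (adj'.homEquiv A X).symm.bijective)

end Aux

theorem hom_from_right_adjoint_iso_hom_in_quotient
    (P : D → Prop)
    -- `E` is a thick subcategory:
    (hP_iso : ∀ {X Y : D}, (X ≅ Y) → P X → P Y)
    (hP_shift : ∀ (X : D) (n : ℤ), P X → P (X⟦n⟧))
    (hP_tri : ∀ T ∈ distTriang D, P T.obj₁ → P T.obj₂ → P T.obj₃)
    (hP_retract : ∀ (X Z : D), P Z → ∀ (i : X ⟶ Z) (r : Z ⟶ X), i ≫ r = 𝟙 X → P X)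
    -- `E` is right admissible, with right adjoint `τ` of the inclusion:
    (τ : D ⥤ ObjectProperty.FullSubcategory P)
    (adj : ObjectProperty.ι P ⊣ τ)
    -- the Verdier quotient `D/F`, `F = E^⊥`, as a localization of `D` at `coneInOrth P`:
    (Dq : Type u₂) [Category.{v} Dq] (q : D ⥤ Dq)
    [q.IsLocalization (coneInOrth P)] :
    Nonempty
      ((((τ ⋙ ObjectProperty.ι P).op.prod (𝟭 D)) ⋙ Functor.hom D) ≅
        ((q.op.prod q) ⋙ Functor.hom Dq)) := by
  let ι := ObjectProperty.ι P
  have hτ : (coneInOrth P).IsInvertedBy τ := tau_inverts τ adj hP_shift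
  let τbar : Dq ⥤ ObjectProperty.FullSubcategory P := Localization.lift τ hτ q
  let fac : q ⋙ τbar ≅ τ := Localization.fac τ hτ q
  have hc : ∀ d : D, coneInOrth P (adj.counit.app d) := counit_mem τ adj hP_shift
  let Qε : ∀ d : D, q.obj (ι.obj (τ.obj d)) ≅ q.obj d :=
    fun d => Localization.isoOfHom q (coneInOrth P) _ (hc d)
  have hQεhom : ∀ d : D, (Qε d).hom = q.map (adj.counit.app d) := fun d => rfl
  -- the natural isomorphism `(τ ⋙ ι) ⋙ q ≅ q`
  let qε : (τ ⋙ ι) ⋙ q ≅ q := NatIso.ofComponents (fun d => Qε d) (by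
    intro d d' f
    show q.map (ι.map (τ.map f)) ≫ (Qε d').hom = (Qε d).hom ≫ q.map f
    rw [hQεhom, hQεhom, ← q.map_comp, ← q.map_comp]
    congr 1
    exact adj.counit.naturality f)
  -- key naturality for the inverses
  have key : ∀ {x y : D} (a : y ⟶ x),
      (Qε y).inv ≫ q.map (ι.map (τ.map a)) = q.map a ≫ (Qε x).inv := by
    intro x y a
    have hn : q.map (ι.map (τ.map a)) ≫ (Qε x).hom = (Qε y).hom ≫ q.map a := by
      rw [hQεhom, hQεhom, ← q.map_comp, ← q.map_comp]
      congr 1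
      exact adj.counit.naturality a
    calc (Qε y).inv ≫ q.map (ι.map (τ.map a))
        = (Qε y).inv ≫ (q.map (ι.map (τ.map a)) ≫ (Qε x).hom) ≫ (Qε x).inv := by simp
      _ = (Qε y).inv ≫ ((Qε y).hom ≫ q.map a) ≫ (Qε x).inv := by rw [hn]
      _ = q.map a ≫ (Qε x).inv := by simp
  -- `ι ⋙ q` is an equivalence
  haveI : Localization.Lifting q (coneInOrth P) ((τ ⋙ ι) ⋙ q) (τbar ⋙ (ι ⋙ q)) :=
    ⟨Functor.isoWhiskerRight fac (ι ⋙ q)⟩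
  let counitIso : τbar ⋙ (ι ⋙ q) ≅ 𝟭 Dq :=
    Localization.liftNatIso q (coneInOrth P) ((τ ⋙ ι) ⋙ q) q _ _ qε
  haveI : ι.Full := ObjectProperty.full_ι P
  haveI : ι.Faithful := ObjectProperty.faithful_ι P
  haveI : IsIso adj.unit := adj.unit_isIso_of_L_fully_faithful
  let unitIso : 𝟭 (ObjectProperty.FullSubcategory P) ≅ (ι ⋙ q) ⋙ τbar :=
    (asIso adj.unit) ≪≫ Functor.isoWhiskerLeft ι fac.symm
  let e : ObjectProperty.FullSubcategory P ≌ Dq := CategoryTheory.Equivalence.mk (ι ⋙ q) τbar unitIso counitIso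
  haveI : (ι ⋙ q).IsEquivalence := inferInstanceAs e.functor.IsEquivalence
  -- the component bijections
  let Φ : ∀ (d d' : D), (ι.obj (τ.obj d) ⟶ d') → (q.obj d ⟶ q.obj d') :=
    fun d d' u => (Qε d).inv ≫ q.map u
  have hbij : ∀ (d d' : D), Function.Bijective (Φ d d') := by
    intro d d'
    have heq : Φ d d' =
        (fun v => (Qε d).inv ≫ v) ∘ (fun w => w ≫ (Qε d').hom) ∘
          (fun x : τ.obj d ⟶ τ.obj d' => (ι ⋙ q).map x) ∘ (adj.homEquiv (τ.obj d) d') := by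
      funext u
      show (Qε d).inv ≫ q.map u =
        (Qε d).inv ≫ (q.map (ι.map (adj.homEquiv (τ.obj d) d' u)) ≫ (Qε d').hom)
      congr 1
      rw [hQεhom, ← q.map_comp]
      congr 1
      have h1 : (adj.homEquiv (τ.obj d) d').symm ((adj.homEquiv (τ.obj d) d') u) = u :=
        Equiv.symm_apply_apply _ _
      rw [Adjunction.homEquiv_counit] at h1
      exact h1.symm
    rw [heq]
    refine Function.Bijective.comp ?_ (Function.Bijective.comp ?_
      (Function.Bijective.comp ?_ (adj.homEquiv _ _).bijective))
    · exact ⟨fun a b hab => by simpa using congrArg (fun z => (Qε d).hom ≫ z) hab,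
        fun y => ⟨(Qε d).hom ≫ y, by simp⟩⟩
    · exact ⟨fun a b hab => by simpa using congrArg (fun z => z ≫ (Qε d').inv) hab,
        fun y => ⟨y ≫ (Qε d').inv, by simp⟩⟩
    · exact ⟨(ι ⋙ q).map_injective, (ι ⋙ q).map_surjective⟩
  -- assemble the natural isomorphism
  refine ⟨NatIso.ofComponents
    (fun X => Equiv.toIso (Equiv.ofBijective (Φ X.1.unop X.2) (hbij X.1.unop X.2))) ?_⟩
  intro X Y fg
  ext u
  show Φ Y.1.unop Y.2 ((ι.map (τ.map fg.1.unop)) ≫ u ≫ fg.2) =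
    q.map fg.1.unop ≫ (Φ X.1.unop X.2 u) ≫ q.map fg.2
  show (Qε Y.1.unop).inv ≫ q.map ((ι.map (τ.map fg.1.unop)) ≫ u ≫ fg.2) =
    q.map fg.1.unop ≫ ((Qε X.1.unop).inv ≫ q.map u) ≫ q.map fg.2
  rw [q.map_comp]; erw [q.map_comp]; rw [← Category.assoc, key]
  simp [Category.assoc]

end Stmt9
end
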